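/- arXiv:cond-mat/9211003 — 4 statements merged into one kernel-verified Lean document; each statement's English description precedes it below -/
import Mathlib

section
/- Exactly 20 of the 36 seven-element subsets B of the 3×3 grid Fin 3 × Fin 3 are strongly defective (SD) configurations (this is the coefficient 20 of p⁷q² in the combinatorial polynomial Q₍₂,₃₎(p) = p⁹ + 9p⁸q + 20p⁷q²). -/
abbrev X3 := Fin 3 × Fin 3

/-- Face-adjacency on the 3×3 grid: agree in one coordinate, differ by exactly 1 in the other. -/
def Adj3 (a b : Fin 3 × Fin 3) : Prop :=
  (a.1 = b.1 ∧ (a.2.val + 1 = b.2.val ∨ b.2.val + 1 = a.2.val)) ∨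
  (a.2 = b.2 ∧ (a.1.val + 1 = b.1.val ∨ b.1.val + 1 = a.1.val))

instance : DecidableRel Adj3 := fun a b => by unfold Adj3; infer_instance

theorem adj3_symm {a b : X3} (h : Adj3 a b) : Adj3 b a := by
  rcases h with ⟨h1, h2⟩ | ⟨h1, h2⟩
  · exact Or.inl ⟨h1.symm, h2.symm⟩
  · exact Or.inr ⟨h1.symm, h2.symm⟩

/-- A set of cells is connected under face-adjacency. -/
def Connected3 (C : Set (Fin 3 × Fin 3)) : Prop :=
  ∀ x ∈ C, ∀ y ∈ C, Relation.ReflTransGen (fun a b => a ∈ C ∧ b ∈ C ∧ Adj3 a b) x y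

/-- A set of black cells is a strongly defective (SD) configuration: there is a connected
subset containing at least 2 of the 3 cells of each of the four sides. -/
def SD3 (B : Set (Fin 3 × Fin 3)) : Prop :=
  ∃ C ⊆ B, Connected3 C ∧
    2 ≤ (C ∩ {c | c.1 = 0}).ncard ∧ 2 ≤ (C ∩ {c | c.1 = 2}).ncard ∧
    2 ≤ (C ∩ {c | c.2 = 0}).ncard ∧ 2 ≤ (C ∩ {c | c.2 = 2}).ncard

def step3 (B S : Finset X3) : Finset X3 :=
  S ∪ B.filter (fun b => ∃ a ∈ S, Adj3 a b)

def reach3 (B : Finset X3) (x : X3) : Finset X3 := (step3 B)^[9] {x}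

theorem subset_step3 (B S : Finset X3) : S ⊆ step3 B S := Finset.subset_union_left

theorem step3_mono {B S T : Finset X3} (h : S ⊆ T) : step3 B S ⊆ step3 B T := by
  apply Finset.union_subset_union h
  intro b hb
  rw [Finset.mem_filter] at hb ⊢
  obtain ⟨hbB, a, ha, hab⟩ := hb
  exact ⟨hbB, a, h ha, hab⟩

theorem step3_subset {B S : Finset X3} (hS : S ⊆ B) : step3 B S ⊆ B :=
  Finset.union_subset hS (Finset.filter_subset _ _)

theorem iter_subset_B {B : Finset X3} {x : X3} (hx : x ∈ B) (n : ℕ) :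
    (step3 B)^[n] {x} ⊆ B := by
  induction n with
  | zero => simpa using hx
  | succ n ih => rw [Function.iterate_succ_apply']; exact step3_subset ih

theorem iter_mono_n {B : Finset X3} {x : X3} {m n : ℕ} (h : m ≤ n) :
    (step3 B)^[m] {x} ⊆ (step3 B)^[n] {x} := by
  induction n with
  | zero => simp [Nat.le_zero.mp h]
  | succ n ih =>
    rcases Nat.lt_or_ge m (n+1) with h' | h'
    · rw [Function.iterate_succ_apply']
      exact (ih (Nat.lt_succ_iff.mp h')).trans (subset_step3 _ _)
    · have : m = n + 1 := le_antisymm h h'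
      subst this; rfl

theorem reach3_fixed {B : Finset X3} {x : X3} (hx : x ∈ B) :
    step3 B (reach3 B x) = reach3 B x := by
  -- there is k < 9 with f (k+1) = f k
  by_cases hstab : ∃ k < 9, (step3 B)^[k+1] {x} = (step3 B)^[k] {x}
  · obtain ⟨k, hk, heq⟩ := hstab
    have hstable : ∀ m, k ≤ m → (step3 B)^[m] {x} = (step3 B)^[k] {x} := by
      intro m hm
      induction m with
      | zero => simp [Nat.le_zero.mp hm]
      | succ m ih =>
        rcases Nat.lt_or_ge k (m+1) with h' | h'
        · have h2 := ih (Nat.lt_succ_iff.mp h')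
          rw [Function.iterate_succ_apply', h2]
          exact (Function.iterate_succ_apply' _ _ _).symm.trans heq
        · exact congrArg (fun n => (step3 B)^[n] ({x} : Finset X3)) (le_antisymm h' hm)
    show (step3 B)^[9+1] {x} = (step3 B)^[9] {x}
    rw [hstable 10 (by omega), hstable 9 (by omega)]
  · push_neg at hstab
    exfalso
    have hcard : ∀ k ≤ 9, k + 1 ≤ ((step3 B)^[k] {x}).card := by
      intro k hk
      induction k with
      | zero => simp
      | succ k ih =>
        have hss : (step3 B)^[k] {x} ⊂ (step3 B)^[k+1] {x} := by
          refine Finset.ssubset_iff_subset_ne.mpr ⟨iter_mono_n (Nat.le_succ k), ?_⟩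
          exact fun h => hstab k (by omega) h.symm
        have := Finset.card_lt_card hss
        have := ih (by omega)
        omega
    have h9 := hcard 9 le_rfl
    have : ((step3 B)^[9] {x}).card ≤ 9 := by
      have := Finset.card_le_card (iter_subset_B hx 9)
      have hB : B.card ≤ 9 := by
        have := Finset.card_le_univ B
        simpa using this
      omega
    omega

theorem iter_subset_reach3 {B : Finset X3} {x : X3} (hx : x ∈ B) (n : ℕ) :
    (step3 B)^[n] {x} ⊆ reach3 B x := by
  rcases Nat.lt_or_ge n 9 with h | h
  · exact iter_mono_n (by omega)
  · induction n with
    | zero => exact absurd h (by omega)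
    | succ n ih =>
      rcases Nat.lt_or_ge n 9 with h' | h'
      · have hn : n = 8 := by omega
        subst hn; exact Finset.Subset.refl _
      · rw [Function.iterate_succ_apply']
        calc step3 B ((step3 B)^[n] {x}) ⊆ step3 B (reach3 B x) := step3_mono (ih h')
        _ = reach3 B x := reach3_fixed hx

theorem mem_reach3_of_rtg {B : Finset X3} {x y : X3} (hx : x ∈ B)
    (h : Relation.ReflTransGen (fun a b => a ∈ (B : Set X3) ∧ b ∈ (B : Set X3) ∧ Adj3 a b) x y) :
    y ∈ reach3 B x := by
  induction h with
  | refl => exact iter_subset_reach3 hx 0 (by rw [Function.iterate_zero_apply]; exact Finset.mem_singleton_self x)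
  | tail _ hbc ih =>
    rw [← reach3_fixed hx]
    apply Finset.mem_union_right
    rw [Finset.mem_filter]
    exact ⟨hbc.2.1, _, ih, hbc.2.2⟩

theorem rtg_of_mem_reach3 {B : Finset X3} {x y : X3} (hx : x ∈ B) (hy : y ∈ reach3 B x) :
    Relation.ReflTransGen
      (fun a b => a ∈ ((reach3 B x : Finset X3) : Set X3) ∧ b ∈ ((reach3 B x : Finset X3) : Set X3) ∧ Adj3 a b) x y := by
  suffices h : ∀ n, ∀ y ∈ (step3 B)^[n] {x},
      Relation.ReflTransGen
        (fun a b => a ∈ ((reach3 B x : Finset X3) : Set X3) ∧ b ∈ ((reach3 B x : Finset X3) : Set X3) ∧ Adj3 a b) x y from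
    h 9 y hy
  intro n
  induction n with
  | zero =>
    intro y hy
    rw [Function.iterate_zero_apply, Finset.mem_singleton] at hy
    subst hy; exact Relation.ReflTransGen.refl
  | succ n ih =>
    intro y hy
    rw [Function.iterate_succ_apply', step3, Finset.mem_union] at hy
    rcases hy with hy | hy
    · exact ih y hy
    · rw [Finset.mem_filter] at hy
      obtain ⟨a, ha, hay⟩ := hy.2
      refine (ih a ha).tail ?_
      refine ⟨iter_subset_reach3 hx n ha, ?_, hay⟩
      have : y ∈ (step3 B)^[n+1] {x} := by
        rw [Function.iterate_succ_apply', step3, Finset.mem_union, Finset.mem_filter]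
        exact Or.inr ⟨hy.1, a, ha, hay⟩
      exact iter_subset_reach3 hx (n+1) this

theorem connected3_reach3 {B : Finset X3} {x : X3} (hx : x ∈ B) :
    Connected3 ((reach3 B x : Finset X3) : Set X3) := by
  intro u hu v hv
  have hsym : Symmetric (fun a b => a ∈ ((reach3 B x : Finset X3) : Set X3) ∧ b ∈ ((reach3 B x : Finset X3) : Set X3) ∧ Adj3 a b) :=
    fun a b ⟨h1, h2, h3⟩ => ⟨h2, h1, adj3_symm h3⟩
  have hxu := rtg_of_mem_reach3 hx (by exact_mod_cast hu)
  have hxv := rtg_of_mem_reach3 hx (by exact_mod_cast hv)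
  exact ((@Relation.ReflTransGen.stdSymm _ _ ⟨fun a b h => hsym h⟩).symm _ _ hxu).trans hxv

def side1 (R : Finset X3) : Finset X3 := R.filter (fun c => c.1 = 0)
def side2 (R : Finset X3) : Finset X3 := R.filter (fun c => c.1 = 2)
def side3 (R : Finset X3) : Finset X3 := R.filter (fun c => c.2 = 0)
def side4 (R : Finset X3) : Finset X3 := R.filter (fun c => c.2 = 2)

def SDdec (B : Finset X3) : Prop :=
  ∃ x ∈ B, 2 ≤ (side1 (reach3 B x)).card ∧ 2 ≤ (side2 (reach3 B x)).card ∧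
    2 ≤ (side3 (reach3 B x)).card ∧ 2 ≤ (side4 (reach3 B x)).card

instance : DecidablePred SDdec := fun B => by unfold SDdec; infer_instance

theorem coe_filter_inter (R : Finset X3) (p : X3 → Prop) [DecidablePred p] :
    ((R : Set X3) ∩ {c | p c}) = ((R.filter p : Finset X3) : Set X3) := by
  ext c; simp [and_comm]

theorem sd3_iff (B : Finset X3) : SD3 (B : Set X3) ↔ SDdec B := by
  constructor
  · rintro ⟨C, hCB, hconn, h1, h2, h3, h4⟩
    obtain ⟨x, hxC, -⟩ := Set.nonempty_of_ncard_ne_zero (s := C ∩ {c | c.1 = 0}) (by omega)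
    have hxB : x ∈ B := hCB hxC
    have hCr : C ⊆ ((reach3 B x : Finset X3) : Set X3) := by
      intro y hy
      have := hconn x hxC y hy
      have h' : Relation.ReflTransGen (fun a b => a ∈ (B : Set X3) ∧ b ∈ (B : Set X3) ∧ Adj3 a b) x y :=
        Relation.ReflTransGen.mono (fun a b ⟨ha, hb, hab⟩ => ⟨hCB ha, hCB hb, hab⟩) _ _ this
      exact_mod_cast mem_reach3_of_rtg hxB h'
    refine ⟨x, hxB, ?_, ?_, ?_, ?_⟩ <;>
    · simp only [side1, side2, side3, side4]
      rw [← Set.ncard_coe_finset, ← coe_filter_inter]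
      refine le_trans ‹_› (Set.ncard_le_ncard (Set.inter_subset_inter_left _ hCr) (Set.toFinite _))
  · rintro ⟨x, hxB, h1, h2, h3, h4⟩
    refine ⟨((reach3 B x : Finset X3) : Set X3), ?_, connected3_reach3 hxB, ?_, ?_, ?_, ?_⟩
    · exact_mod_cast iter_subset_B hxB 9
    all_goals
      rw [coe_filter_inter, Set.ncard_coe_finset]
      first | exact h1 | exact h2 | exact h3 | exact h4

theorem set_count (P : Set X3 → Prop) (Q : Finset X3 → Prop) [DecidablePred Q]
    (h : ∀ s : Finset X3, P ↑s ↔ Q s) :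
    {B : Set X3 | P B}.ncard = (Finset.univ.filter Q).card := by
  have himg : {B : Set X3 | P B} = (fun s : Finset X3 => (s : Set X3)) '' ↑(Finset.univ.filter Q) := by
    ext B
    constructor
    · intro hB
      refine ⟨(Set.toFinite B).toFinset, ?_, by simp⟩
      simp only [Finset.coe_filter, Finset.mem_univ, true_and, Set.mem_setOf_eq]
      rw [← h, Set.Finite.coe_toFinset]
      exact hB
    · rintro ⟨s, hs, rfl⟩
      simp only [Finset.coe_filter, Finset.mem_univ, true_and, Set.mem_setOf_eq] at hs
      exact (h s).mpr hs
  rw [himg, Set.ncard_image_of_injective _ Finset.coe_injective, Set.ncard_coe_finset]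

set_option maxHeartbeats 4000000 in
/-- Exactly 20 of the 36 seven-element subsets of the 3×3 grid are SD configurations. -/
theorem twenty_of_thirtysix_seven_element_subsets_are_SD :
    {B : Set (Fin 3 × Fin 3) | B.ncard = 7}.ncard = 36 ∧
    {B : Set (Fin 3 × Fin 3) | B.ncard = 7 ∧ SD3 B}.ncard = 20 := by
  constructor
  · rw [set_count (fun B => B.ncard = 7) (fun s => s.card = 7)
      (fun s => by simp only [Set.ncard_coe_finset])]
    decide
  · rw [set_count (fun B => B.ncard = 7 ∧ SD3 B) (fun s => s.card = 7 ∧ SDdec s)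
      (fun s => by simp only [Set.ncard_coe_finset, sd3_iff])]
    decide
end

section
/- Fix ζ > 0; on [0,ζ] define ρ(z) = cosh(ζ/2 − z)/cosh(ζ/2), G(z,u) = sinh(min(z,u))·sinh(ζ − max(z,u))/sinh(ζ), Q(p) = 12p⁹ − 31p⁸ + 20p⁷, and for continuous φ : [0,ζ] → ℝ define F[φ](z) = ρ(z) + (1 − ρ(z))·∫₀^ζ G(z,u)·Q(φ(u)) du. If 0 ≤ φ(u) ≤ 1 for all u ∈ [0,ζ], then ρ(z) ≤ F[φ](z) ≤ 1 for all z ∈ [0,ζ]. -/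
open Real

/-- Stationary no-branching absorption probability of the simplest model. -/
noncomputable def rhoAbs (ζ z : ℝ) : ℝ := Real.cosh (ζ/2 - z) / Real.cosh (ζ/2)

/-- Stationary first-branching kernel of the simplest model. -/
noncomputable def Gker (ζ z u : ℝ) : ℝ :=
  Real.sinh (min z u) * Real.sinh (ζ - max z u) / Real.sinh ζ

/-- The combinatorial polynomial Q₍₂,₃₎ counting strongly defective configurations. -/
def Qpoly (p : ℝ) : ℝ := 12*p^9 - 31*p^8 + 20*p^7

/-- The renormalization (recoding) operator of the simplest model. -/
noncomputable def Fop (ζ : ℝ) (φ : ℝ → ℝ) (z : ℝ) : ℝ :=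
  rhoAbs ζ z + (1 - rhoAbs ζ z) * ∫ u in (0:ℝ)..ζ, Gker ζ z u * Qpoly (φ u)

lemma Qpoly_nonneg {p : ℝ} (h0 : 0 ≤ p) (h1 : p ≤ 1) : 0 ≤ Qpoly p := by
  have h7 : 0 ≤ p ^ 7 := pow_nonneg h0 7
  have h : 0 ≤ (1 - p) * (19 - 12 * p) := mul_nonneg (by linarith) (by linarith)
  unfold Qpoly
  nlinarith [mul_nonneg h7 h]

lemma integral_sinh' (a b : ℝ) : (∫ x in a..b, Real.sinh x) = Real.cosh b - Real.cosh a :=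
  intervalIntegral.integral_eq_sub_of_hasDerivAt (fun x _ => Real.hasDerivAt_cosh x)
    (Real.continuous_sinh.intervalIntegrable a b)

lemma Qpoly_le_one {p : ℝ} (h0 : 0 ≤ p) (h1 : p ≤ 1) : Qpoly p ≤ 1 := by
  have hT : 0 ≤ 1 + 2*p + 3*p^2 + 4*p^3 + 5*p^4 + 6*p^5 + 7*p^6 - 12*p^7 := by
    nlinarith [pow_nonneg h0 2, pow_nonneg h0 3, pow_nonneg h0 4, pow_nonneg h0 5,
      pow_nonneg h0 6, pow_le_pow_of_le_one h0 h1 (by norm_num : (6:ℕ) ≤ 7),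
      pow_le_pow_of_le_one h0 h1 (by norm_num : (4:ℕ) ≤ 6)]
  have key : 1 - Qpoly p = (1 - p)^2 *
      (1 + 2*p + 3*p^2 + 4*p^3 + 5*p^4 + 6*p^5 + 7*p^6 - 12*p^7) := by
    unfold Qpoly; ring
  nlinarith [sq_nonneg (1 - p), mul_nonneg (sq_nonneg (1 - p)) hT]

/-- The recoding operator maps [0,1]-valued continuous functions to functions
between ρ and 1 on [0,ζ]. -/
theorem Fop_bounds (ζ : ℝ) (hζ : 0 < ζ) (φ : ℝ → ℝ) (hφ : Continuous φ)
    (hφ01 : ∀ u ∈ Set.Icc (0:ℝ) ζ, 0 ≤ φ u ∧ φ u ≤ 1) :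
    ∀ z ∈ Set.Icc (0:ℝ) ζ, rhoAbs ζ z ≤ Fop ζ φ z ∧ Fop ζ φ z ≤ 1 := by
  intro z hz
  obtain ⟨hz0, hzζ⟩ := hz
  have hsζ : 0 < Real.sinh ζ := Real.sinh_pos_iff.2 hζ
  -- rho bounds
  have hρ0 : 0 ≤ rhoAbs ζ z := div_nonneg (Real.cosh_pos _).le (Real.cosh_pos _).le
  have hρ1 : rhoAbs ζ z ≤ 1 := by
    rw [rhoAbs, div_le_one (Real.cosh_pos _)]
    rw [Real.cosh_le_cosh]
    rw [abs_of_nonneg (by linarith : (0:ℝ) ≤ ζ/2)]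
    rw [abs_le]
    constructor <;> linarith
  -- G nonneg
  have hGnn : ∀ u ∈ Set.Icc (0:ℝ) ζ, 0 ≤ Gker ζ z u := by
    intro u hu
    obtain ⟨hu0, huζ⟩ := hu
    unfold Gker
    apply div_nonneg _ hsζ.le
    exact mul_nonneg (Real.sinh_nonneg_iff.2 (le_min hz0 hu0))
      (Real.sinh_nonneg_iff.2 (by simp [sub_nonneg, max_le_iff]; exact ⟨hzζ, huζ⟩))
  -- continuity / integrability
  have hGc : Continuous (fun u => Gker ζ z u) := by
    unfold Gker; fun_prop
  have hfc : Continuous (fun u => Gker ζ z u * Qpoly (φ u)) := by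
    unfold Gker Qpoly; fun_prop
  have hQ : ∀ u ∈ Set.Icc (0:ℝ) ζ, 0 ≤ Qpoly (φ u) ∧ Qpoly (φ u) ≤ 1 := by
    intro u hu
    exact ⟨Qpoly_nonneg (hφ01 u hu).1 (hφ01 u hu).2, Qpoly_le_one (hφ01 u hu).1 (hφ01 u hu).2⟩
  set I := ∫ u in (0:ℝ)..ζ, Gker ζ z u * Qpoly (φ u) with hIdef
  -- lower bound on I
  have hI0 : 0 ≤ I := by
    apply intervalIntegral.integral_nonneg hζ.le
    intro u hu
    exact mul_nonneg (hGnn u hu) (hQ u hu).1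
  -- I ≤ ∫ G
  have hIJ : I ≤ ∫ u in (0:ℝ)..ζ, Gker ζ z u := by
    apply intervalIntegral.integral_mono_on hζ.le
      (hfc.intervalIntegrable _ _) (hGc.intervalIntegrable _ _)
    intro u hu
    exact mul_le_of_le_one_right (hGnn u hu) (hQ u hu).2
  -- compute ∫ G
  have hJ1 : (∫ u in (0:ℝ)..ζ, Gker ζ z u) ≤ 1 := by
    have hsplit : (∫ u in (0:ℝ)..z, Gker ζ z u) + (∫ u in z..ζ, Gker ζ z u)
        = ∫ u in (0:ℝ)..ζ, Gker ζ z u :=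
      intervalIntegral.integral_add_adjacent_intervals
        (hGc.intervalIntegrable _ _) (hGc.intervalIntegrable _ _)
    have h1 : (∫ u in (0:ℝ)..z, Gker ζ z u)
        = (Real.cosh z - 1) * (Real.sinh (ζ - z) / Real.sinh ζ) := by
      have : (∫ u in (0:ℝ)..z, Gker ζ z u)
          = ∫ u in (0:ℝ)..z, Real.sinh u * (Real.sinh (ζ - z) / Real.sinh ζ) := by
        apply intervalIntegral.integral_congr
        intro u hu
        rw [Set.uIcc_of_le hz0] at hu
        unfold Gker
        rw [min_eq_right hu.2, max_eq_left hu.2]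
        ring
      rw [this, intervalIntegral.integral_mul_const, integral_sinh', Real.cosh_zero]
    have h2 : (∫ u in z..ζ, Gker ζ z u)
        = (Real.cosh (ζ - z) - 1) * (Real.sinh z / Real.sinh ζ) := by
      have : (∫ u in z..ζ, Gker ζ z u)
          = ∫ u in z..ζ, Real.sinh (ζ - u) * (Real.sinh z / Real.sinh ζ) := by
        apply intervalIntegral.integral_congr
        intro u hu
        rw [Set.uIcc_of_le hzζ] at hu
        unfold Gker
        rw [min_eq_left hu.1, max_eq_right hu.1]
        ring
      rw [this, intervalIntegral.integral_mul_const]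
      have hcomp : (∫ u in z..ζ, Real.sinh (ζ - u))
          = ∫ x in (ζ - ζ)..(ζ - z), Real.sinh x :=
        intervalIntegral.integral_comp_sub_left Real.sinh ζ
      rw [hcomp]
      simp [integral_sinh']
    rw [← hsplit, h1, h2]
    have hsz : 0 ≤ Real.sinh z := Real.sinh_nonneg_iff.2 hz0
    have hszz : 0 ≤ Real.sinh (ζ - z) := Real.sinh_nonneg_iff.2 (by linarith)
    have hadd := Real.sinh_add (ζ - z) z
    rw [sub_add_cancel] at hadd
    have key : (Real.cosh z - 1) * Real.sinh (ζ - z)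
        + (Real.cosh (ζ - z) - 1) * Real.sinh z ≤ Real.sinh ζ := by nlinarith
    calc (Real.cosh z - 1) * (Real.sinh (ζ - z) / Real.sinh ζ)
          + (Real.cosh (ζ - z) - 1) * (Real.sinh z / Real.sinh ζ)
        = ((Real.cosh z - 1) * Real.sinh (ζ - z)
            + (Real.cosh (ζ - z) - 1) * Real.sinh z) / Real.sinh ζ := by ring
      _ ≤ 1 := (div_le_one hsζ).2 key
  -- conclude
  have h1ρ : 0 ≤ 1 - rhoAbs ζ z := by linarith
  constructor
  · unfold Fop
    nlinarith [mul_nonneg h1ρ hI0]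
  · unfold Fop
    nlinarith [mul_nonneg h1ρ (sub_nonneg.2 (le_trans hIJ hJ1))]
end

section
/- Fix ζ > 0 and let Q(p) = 12p⁹ − 31p⁸ + 20p⁷. Let P : [0,ζ] → ℝ be continuous with P(ζ − z) = P(z) for all z ∈ [0,ζ], and define β(z) = (1/sinh ζ)·∫₀^z sinh(u)·Q(P(u)) du. Then for every z ∈ [0,ζ], ∫₀^ζ [sinh(min(z,u))·sinh(ζ − max(z,u))/sinh(ζ)]·Q(P(u)) du = sinh(ζ − z)·β(z) + sinh(z)·β(ζ − z). -/
open Real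

/-- Reduction of the fixed point integral to the symmetric form via
β(z) = (1/sinh ζ)·∫₀^z sinh(u)·Q(P(u)) du:
∫₀^ζ G(z,u)·Q(P(u)) du = sinh(ζ − z)·β(z) + sinh(z)·β(ζ − z) for symmetric P. -/
theorem integral_reduction_symmetric_form (ζ : ℝ) (hζ : 0 < ζ) (P : ℝ → ℝ)
    (hP : Continuous P) (hsym : ∀ z ∈ Set.Icc (0:ℝ) ζ, P (ζ - z) = P z) :
    ∀ z ∈ Set.Icc (0:ℝ) ζ,
      (∫ u in (0:ℝ)..ζ, Gker ζ z u * Qpoly (P u))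
        = Real.sinh (ζ - z) * ((1 / Real.sinh ζ) * ∫ u in (0:ℝ)..z, Real.sinh u * Qpoly (P u))
          + Real.sinh z * ((1 / Real.sinh ζ) * ∫ u in (0:ℝ)..(ζ - z), Real.sinh u * Qpoly (P u)) := by
  rintro z ⟨hz0, hzζ⟩
  have hQ : Continuous Qpoly := by unfold Qpoly; continuity
  have hG : Continuous fun u => Gker ζ z u * Qpoly (P u) := by
    unfold Gker
    exact (((Real.continuous_sinh.comp (continuous_const.min continuous_id)).mul
      (Real.continuous_sinh.comp (continuous_const.sub
        (continuous_const.max continuous_id)))).div_const _).mul (hQ.comp hP)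
  have hsplit : (∫ u in (0:ℝ)..ζ, Gker ζ z u * Qpoly (P u))
      = (∫ u in (0:ℝ)..z, Gker ζ z u * Qpoly (P u))
        + ∫ u in z..ζ, Gker ζ z u * Qpoly (P u) := by
    rw [intervalIntegral.integral_add_adjacent_intervals
      (hG.intervalIntegrable _ _) (hG.intervalIntegrable _ _)]
  rw [hsplit]
  have h1 : (∫ u in (0:ℝ)..z, Gker ζ z u * Qpoly (P u))
      = Real.sinh (ζ - z) * ((1 / Real.sinh ζ) * ∫ u in (0:ℝ)..z, Real.sinh u * Qpoly (P u)) := by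
    have : (∫ u in (0:ℝ)..z, Gker ζ z u * Qpoly (P u))
        = ∫ u in (0:ℝ)..z, (Real.sinh (ζ - z) * (1 / Real.sinh ζ)) * (Real.sinh u * Qpoly (P u)) := by
      apply intervalIntegral.integral_congr
      intro u hu
      rw [Set.uIcc_of_le hz0] at hu
      obtain ⟨hu0, huz⟩ := hu
      unfold Gker
      dsimp only
      rw [min_eq_right huz, max_eq_left huz]
      ring
    rw [this, intervalIntegral.integral_const_mul, mul_assoc]
  have h2 : (∫ u in z..ζ, Gker ζ z u * Qpoly (P u))
      = Real.sinh z * ((1 / Real.sinh ζ) * ∫ u in (0:ℝ)..(ζ - z), Real.sinh u * Qpoly (P u)) := by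
    have e1 : (∫ u in z..ζ, Gker ζ z u * Qpoly (P u))
        = ∫ u in z..ζ, (Real.sinh z * (1 / Real.sinh ζ)) *
            ((fun v => Real.sinh v * Qpoly (P v)) (ζ - u)) := by
      apply intervalIntegral.integral_congr
      intro u hu
      rw [Set.uIcc_of_le hzζ] at hu
      obtain ⟨huz, huζ⟩ := hu
      unfold Gker
      dsimp only
      rw [min_eq_left huz, max_eq_right huz]
      have hu0 : (0:ℝ) ≤ u := le_trans hz0 huz
      rw [hsym u ⟨hu0, huζ⟩]
      ring
    rw [e1, intervalIntegral.integral_const_mul,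
      intervalIntegral.integral_comp_sub_left (fun v => Real.sinh v * Qpoly (P v)) ζ,
      sub_self, mul_assoc]
  rw [h1, h2]
end

section
/- Let B₁, B₂ ⊆ Fin 3 × Fin 3 both be strongly defective (SD) configurations, and form the combined black set B ⊆ Fin 6 × Fin 3 consisting of the cells (i,j) with i ≤ 2 and (i,j) ∈ B₁ together with the cells (i+3, j) with (i,j) ∈ B₂. Then there exists a connected subset of B (under face-adjacency in Fin 6 × Fin 3) that contains a cell in the column {(0,j) : j ∈ Fin 3} and a cell in the column {(5,j) : j ∈ Fin 3}. -/
/-- Face-adjacency on the 6×3 grid. -/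
def Adj63 (a b : Fin 6 × Fin 3) : Prop :=
  (a.1 = b.1 ∧ (a.2.val + 1 = b.2.val ∨ b.2.val + 1 = a.2.val)) ∨
  (a.2 = b.2 ∧ (a.1.val + 1 = b.1.val ∨ b.1.val + 1 = a.1.val))

/-- A set of cells of the 6×3 grid is connected under face-adjacency. -/
def Connected63 (C : Set (Fin 6 × Fin 3)) : Prop :=
  ∀ x ∈ C, ∀ y ∈ C, Relation.ReflTransGen (fun a b => a ∈ C ∧ b ∈ C ∧ Adj63 a b) x y

/-- Embedding of the left 3×3 square into the 6×3 rectangle. -/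
def embLeft (p : Fin 3 × Fin 3) : Fin 6 × Fin 3 := (p.1.castLE (by omega), p.2)

/-- Embedding of the right 3×3 square into the 6×3 rectangle. -/
def embRight (p : Fin 3 × Fin 3) : Fin 6 × Fin 3 := (p.1.addNat 3, p.2)

lemma adj_embLeft {a b : Fin 3 × Fin 3} (h : Adj3 a b) : Adj63 (embLeft a) (embLeft b) := by
  simp only [Adj3, Adj63, embLeft, Prod.ext_iff, Fin.ext_iff, Fin.coe_castLE] at h ⊢
  omega

lemma adj_embRight {a b : Fin 3 × Fin 3} (h : Adj3 a b) : Adj63 (embRight a) (embRight b) := by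
  simp only [Adj3, Adj63, embRight, Prod.ext_iff, Fin.ext_iff, Fin.addNat] at h ⊢
  omega

lemma pigeon (P Q : Fin 3 → Prop) (hP : 2 ≤ {j | P j}.ncard) (hQ : 2 ≤ {j | Q j}.ncard) :
    ∃ j, P j ∧ Q j := by
  by_contra h
  push_neg at h
  have hd : Disjoint {j | P j} {j | Q j} := by
    rw [Set.disjoint_left]; intro j hj hj'; exact h j hj hj'
  have := Set.ncard_union_eq hd (Set.toFinite _) (Set.toFinite _)
  have hle : ({j | P j} ∪ {j | Q j}).ncard ≤ (Set.univ : Set (Fin 3)).ncard :=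
    Set.ncard_le_ncard (Set.subset_univ _) (Set.toFinite _)
  rw [Set.ncard_univ] at hle
  simp at hle
  omega

lemma col_ncard (C : Set (Fin 3 × Fin 3)) (i : Fin 3) :
    (C ∩ {c | c.1 = i}).ncard = {j | (i, j) ∈ C}.ncard := by
  rw [show C ∩ {c | c.1 = i} = (fun j => (i, j)) '' {j | (i, j) ∈ C} by
    ext ⟨a, b⟩
    simp only [Set.mem_inter_iff, Set.mem_image, Set.mem_setOf_eq, Prod.ext_iff, Prod.mk.injEq]
    constructor
    · rintro ⟨hC, rfl⟩; exact ⟨b, hC, rfl, rfl⟩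
    · rintro ⟨j, hj, rfl, rfl⟩; exact ⟨hj, rfl⟩]
  exact Set.ncard_image_of_injective _ (fun a b hab => by simpa using hab)

/-- Two SD squares attached face to face carry a connected black cluster running from the
left outer column to the right outer column of the combined 6×3 rectangle. -/
theorem SD_squares_attached_connect (B₁ B₂ : Set (Fin 3 × Fin 3))
    (h₁ : SD3 B₁) (h₂ : SD3 B₂) :
    ∃ C ⊆ embLeft '' B₁ ∪ embRight '' B₂, Connected63 C ∧
      (∃ c ∈ C, c.1 = (0 : Fin 6)) ∧ (∃ c ∈ C, c.1 = (5 : Fin 6)) := by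
  obtain ⟨C₁, hC₁B, hconn₁, h10, h12, -, -⟩ := h₁
  obtain ⟨C₂, hC₂B, hconn₂, h20, h22, -, -⟩ := h₂
  -- bridge column
  rw [col_ncard] at h12 h20
  obtain ⟨j, hj1, hj2⟩ := pigeon _ _ h12 h20
  -- endpoints
  have h10' : (C₁ ∩ {c | c.1 = 0}).Nonempty := by
    rw [← Set.ncard_pos (Set.toFinite _)] at *; omega
  have h22' : (C₂ ∩ {c | c.1 = 2}).Nonempty := by
    rw [← Set.ncard_pos (Set.toFinite _)] at *; omega
  obtain ⟨p0, hp0C, hp0⟩ := h10'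
  obtain ⟨p5, hp5C, hp5⟩ := h22'
  set C : Set (Fin 6 × Fin 3) := embLeft '' C₁ ∪ embRight '' C₂ with hC
  have hsub : C ⊆ embLeft '' B₁ ∪ embRight '' B₂ :=
    Set.union_subset_union (Set.image_mono hC₁B) (Set.image_mono hC₂B)
  have hliftL : ∀ x ∈ C₁, ∀ y ∈ C₁,
      Relation.ReflTransGen (fun a b => a ∈ C ∧ b ∈ C ∧ Adj63 a b) (embLeft x) (embLeft y) := by
    intro x hx y hy
    refine Relation.ReflTransGen.lift embLeft ?_ x y (hconn₁ x hx y hy)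
    rintro a b ⟨ha, hb, hab⟩
    exact ⟨Or.inl ⟨a, ha, rfl⟩, Or.inl ⟨b, hb, rfl⟩, adj_embLeft hab⟩
  have hliftR : ∀ x ∈ C₂, ∀ y ∈ C₂,
      Relation.ReflTransGen (fun a b => a ∈ C ∧ b ∈ C ∧ Adj63 a b) (embRight x) (embRight y) := by
    intro x hx y hy
    refine Relation.ReflTransGen.lift embRight ?_ x y (hconn₂ x hx y hy)
    rintro a b ⟨ha, hb, hab⟩
    exact ⟨Or.inr ⟨a, ha, rfl⟩, Or.inr ⟨b, hb, rfl⟩, adj_embRight hab⟩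
  have hadj : Adj63 (embLeft (2, j)) (embRight (0, j)) := by
    right
    refine ⟨rfl, Or.inl ?_⟩
    norm_num [embLeft, embRight, Fin.addNat]
  have hbridge : Relation.ReflTransGen (fun a b => a ∈ C ∧ b ∈ C ∧ Adj63 a b)
      (embLeft (2, j)) (embRight (0, j)) :=
    Relation.ReflTransGen.single ⟨Or.inl ⟨_, hj1, rfl⟩, Or.inr ⟨_, hj2, rfl⟩, hadj⟩
  have hbridge' : Relation.ReflTransGen (fun a b => a ∈ C ∧ b ∈ C ∧ Adj63 a b)
      (embRight (0, j)) (embLeft (2, j)) :=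
    Relation.ReflTransGen.single ⟨Or.inr ⟨_, hj2, rfl⟩, Or.inl ⟨_, hj1, rfl⟩, by
      unfold Adj63 at hadj ⊢; tauto⟩
  refine ⟨C, hsub, ?_, ⟨embLeft p0, Or.inl ⟨p0, hp0C, rfl⟩, ?_⟩,
    ⟨embRight p5, Or.inr ⟨p5, hp5C, rfl⟩, ?_⟩⟩
  · rintro x (⟨a, ha, rfl⟩ | ⟨a, ha, rfl⟩) y (⟨b, hb, rfl⟩ | ⟨b, hb, rfl⟩)
    · exact hliftL a ha b hb
    · exact ((hliftL a ha _ hj1).trans hbridge).trans (hliftR _ hj2 b hb)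
    · exact ((hliftR a ha _ hj2).trans hbridge').trans (hliftL _ hj1 b hb)
    · exact hliftR a ha b hb
  · have h : p0.1 = 0 := hp0
    simp [embLeft, Fin.ext_iff, h]
  · have h : p5.1 = 2 := hp5
    simp [embRight, Fin.ext_iff, Fin.addNat, h]
end
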